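/- Let q > 1 be a real number and n ≥ 1 an integer. For 0 ≤ l ≤ 2n, let 𝔐_l be the (l+1)×(l+1) real matrix with (i, s)-entry (-q)^{s(2n-i)} (0 ≤ i, s ≤ l), and let d_{i,l} (0 ≤ i ≤ l) be the components of the unique solution of 𝔐_l d = (0, …, 0, 1)^T. Let Δ be the (2n+1)×(2n+1) upper triangular matrix with Δ_{i,l} = d_{i,l} for i ≤ l, let v ∈ ℝ^{2n+1} have v_0 = 0 and v_k = (-q)^{n(2n-k) - 4n²} - (-q)^{-2n²} for 1 ≤ k ≤ 2n, and let K = (K_0, …, K_{2n}) be the unique solution of (𝔐_{2n}·Δ)·K = v. Then: (i) K_0 = 0 and K_i = 0 for every n+1 ≤ i ≤ 2n; (ii) d_{n,n}·K_n = (-q)^{-4n²}; and (iii) for every 1 ≤ l ≤ n-1, d_{n-l,n-l}·K_{n-l} = (-q)^{n+l} · ((-q)^n - (-q)^{l-1}) / ((-q)^l - 1) · d_{n-l+1,n-l+1}·K_{n-l+1}. -/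

import Mathlib

/- Lemma 4.5: vanishing of K_0 and of K_i for n+1 ≤ i ≤ 2n, the base case
d_{n,n}·K_n = (-q)^{-4n²}, and the first-order recursion for d_{n-l,n-l}·K_{n-l}. -/

/-- The (l+1)×(l+1) matrix 𝔐_l with (i,s)-entry (-q)^{s(2n-i)}. -/
noncomputable def Mmat (q : ℝ) (n l : ℕ) : Matrix (Fin (l + 1)) (Fin (l + 1)) ℝ :=
  Matrix.of fun i s => (-q) ^ ((s : ℕ) * (2 * n - (i : ℕ)))

open Finset

noncomputable def cbin (t : ℝ) (n k : ℕ) : ℝ :=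
  ∏ j ∈ Finset.range k, (1 - t ^ (n - j)) / (1 - t ^ (j + 1))

lemma cbin_zero (t : ℝ) (n : ℕ) : cbin t n 0 = 1 := by simp [cbin]

lemma cbin_succ (t : ℝ) (n k : ℕ) :
    cbin t n (k + 1) = cbin t n k * ((1 - t ^ (n - k)) / (1 - t ^ (k + 1))) := by
  rw [cbin, Finset.prod_range_succ, cbin]

lemma cbin_eq_zero (t : ℝ) {n k : ℕ} (h : n < k) : cbin t n k = 0 := by
  apply Finset.prod_eq_zero (i := n) (Finset.mem_range.mpr h)
  simp [Nat.sub_self]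

lemma cbin_self (t : ℝ) (ht : ∀ m : ℕ, 1 ≤ m → t ^ m ≠ 1) (n : ℕ) : cbin t n n = 1 := by
  rw [cbin, Finset.prod_div_distrib]
  have hnum : ∏ j ∈ Finset.range n, (1 - t ^ (n - j)) =
      ∏ j ∈ Finset.range n, (1 - t ^ (j + 1)) := by
    rw [← Finset.prod_range_reflect (fun j => (1 : ℝ) - t ^ (j + 1)) n]
    apply Finset.prod_congr rfl
    intro j hj
    have : n - 1 - j + 1 = n - j := by
      have := Finset.mem_range.mp hj; omega
    rw [this]
  rw [hnum]
  apply div_self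
  apply Finset.prod_ne_zero_iff.mpr
  intro j _
  exact sub_ne_zero.mpr (Ne.symm (ht (j + 1) (by omega)))

lemma cbin_pascal (t : ℝ) (ht : ∀ m : ℕ, 1 ≤ m → t ^ m ≠ 1) (N m : ℕ) :
    cbin t (N + 1) (m + 1) = cbin t N m + t ^ (m + 1) * cbin t N (m + 1) := by
  by_cases hm : N < m
  · rw [cbin_eq_zero t (by omega), cbin_eq_zero t hm, cbin_eq_zero t (by omega)]
    ring
  push_neg at hm
  -- numerators and denominators
  set P : ℕ → ℕ → ℝ := fun k n => ∏ j ∈ Finset.range k, (1 - t ^ (n - j)) with hP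
  set D : ℕ → ℝ := fun k => ∏ j ∈ Finset.range k, (1 - t ^ (j + 1)) with hD
  have hcb : ∀ n k, cbin t n k = P k n / D k := by
    intro n k
    rw [cbin, Finset.prod_div_distrib]
  have hDne : ∀ k, D k ≠ 0 := by
    intro k
    apply Finset.prod_ne_zero_iff.mpr
    intro j _
    exact sub_ne_zero.mpr (Ne.symm (ht (j + 1) (by omega)))
  have hDsucc : D (m + 1) = D m * (1 - t ^ (m + 1)) := Finset.prod_range_succ _ _
  have h1 : P (m + 1) (N + 1) = (1 - t ^ (N + 1)) * P m N := by
    show (∏ j ∈ Finset.range (m + 1), (1 - t ^ (N + 1 - j))) =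
      (1 - t ^ (N + 1)) * ∏ j ∈ Finset.range m, (1 - t ^ (N - j))
    rw [Finset.prod_range_succ' (fun j => (1 : ℝ) - t ^ (N + 1 - j)) m]
    simp only [Nat.succ_sub_succ_eq_sub, Nat.sub_zero]
    ring
  have h2 : P (m + 1) N = P m N * (1 - t ^ (N - m)) := Finset.prod_range_succ _ _
  have h3 : t ^ (m + 1) * t ^ (N - m) = t ^ (N + 1) := by
    rw [← pow_add]; congr 1; omega
  rw [hcb, hcb, hcb, h1, h2, hDsucc]
  have hne : (1 : ℝ) - t ^ (m + 1) ≠ 0 := sub_ne_zero.mpr (Ne.symm (ht (m + 1) (by omega)))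
  have e1 : P m N / D m = P m N * (1 - t ^ (m + 1)) / (D m * (1 - t ^ (m + 1))) :=
    (mul_div_mul_right _ _ hne).symm
  rw [e1, mul_div_assoc', ← add_div]
  congr 1
  linear_combination (P m N) * h3

lemma newton_key (t : ℝ) (ht : ∀ m : ℕ, 1 ≤ m → t ^ m ≠ 1) (a Y : ℝ) :
    ∀ N : ℕ, Y ^ N = ∑ m ∈ Finset.range (N + 1),
      a ^ (N - m) * cbin t N m * ∏ j ∈ Finset.range m, (Y - a * t ^ j) := by
  intro N
  induction N with
  | zero => simp [cbin_zero]
  | succ N ih =>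
    have step : Y ^ (N + 1) =
        (∑ m ∈ Finset.range (N + 1),
          a ^ (N - m) * cbin t N m * ∏ j ∈ Finset.range (m + 1), (Y - a * t ^ j)) +
        ∑ m ∈ Finset.range (N + 1),
          a ^ (N - m) * a * t ^ m * cbin t N m * ∏ j ∈ Finset.range m, (Y - a * t ^ j) := by
      have : Y ^ (N + 1) = Y * Y ^ N := by ring
      rw [this, ih, Finset.mul_sum, ← Finset.sum_add_distrib]
      apply Finset.sum_congr rfl
      intro m _
      rw [Finset.prod_range_succ]
      ring
    rw [step]
    -- target
    rw [Finset.sum_range_succ' (fun m => a ^ (N + 1 - m) * cbin t (N + 1) m *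
        ∏ j ∈ Finset.range m, (Y - a * t ^ j)) (N + 1)]
    simp only [Nat.succ_sub_succ_eq_sub, Nat.sub_zero, cbin_zero,
      Finset.range_zero, Finset.prod_empty, mul_one]
    have expand : ∀ m ∈ Finset.range (N + 1),
        a ^ (N - m) * cbin t (N + 1) (m + 1) * ∏ j ∈ Finset.range (m + 1), (Y - a * t ^ j) =
        a ^ (N - m) * cbin t N m * (∏ j ∈ Finset.range (m + 1), (Y - a * t ^ j)) +
        a ^ (N - m) * t ^ (m + 1) * cbin t N (m + 1) *
          ∏ j ∈ Finset.range (m + 1), (Y - a * t ^ j) := by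
      intro m _
      rw [cbin_pascal t ht]
      ring
    rw [Finset.sum_congr rfl expand, Finset.sum_add_distrib]
    -- second sum on the left: reindex
    have left2 : ∑ m ∈ Finset.range (N + 1),
        a ^ (N - m) * a * t ^ m * cbin t N m * ∏ j ∈ Finset.range m, (Y - a * t ^ j) =
        (∑ m ∈ Finset.range N,
          a ^ (N - (m + 1)) * a * t ^ (m + 1) * cbin t N (m + 1) *
            ∏ j ∈ Finset.range (m + 1), (Y - a * t ^ j)) + a ^ N * a := by
      rw [Finset.sum_range_succ' (fun m => a ^ (N - m) * a * t ^ m * cbin t N m *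
        ∏ j ∈ Finset.range m, (Y - a * t ^ j)) N]
      simp [cbin_zero]
    rw [left2]
    have right2 : ∑ m ∈ Finset.range (N + 1),
        a ^ (N - m) * t ^ (m + 1) * cbin t N (m + 1) *
          ∏ j ∈ Finset.range (m + 1), (Y - a * t ^ j) =
        ∑ m ∈ Finset.range N,
          a ^ (N - m) * t ^ (m + 1) * cbin t N (m + 1) *
            ∏ j ∈ Finset.range (m + 1), (Y - a * t ^ j) := by
      rw [Finset.sum_range_succ, cbin_eq_zero t (by omega)]
      ring
    rw [right2]
    have congr2 : ∀ m ∈ Finset.range N,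
        a ^ (N - (m + 1)) * a * t ^ (m + 1) * cbin t N (m + 1) *
          ∏ j ∈ Finset.range (m + 1), (Y - a * t ^ j) =
        a ^ (N - m) * t ^ (m + 1) * cbin t N (m + 1) *
          ∏ j ∈ Finset.range (m + 1), (Y - a * t ^ j) := by
      intro m hm
      have : a ^ (N - (m + 1)) * a = a ^ (N - m) := by
        rw [← pow_succ]
        congr 1
        have := Finset.mem_range.mp hm; omega
      rw [← this]
    rw [Finset.sum_congr rfl congr2]
    ring

noncomputable def Ppoly (c : ℕ → ℝ) (l : ℕ) : Polynomial ℝ :=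
  ∑ s ∈ Finset.range (l + 1), Polynomial.C (c s) * Polynomial.X ^ s

lemma Ppoly_coeff (c : ℕ → ℝ) (l m : ℕ) :
    (Ppoly c l).coeff m = if m ≤ l then c m else 0 := by
  rw [Ppoly, Polynomial.finset_sum_coeff]
  simp only [Polynomial.coeff_C_mul, Polynomial.coeff_X_pow]
  rw [Finset.sum_congr rfl (fun s _ => by rw [mul_ite, mul_one, mul_zero])]
  rw [Finset.sum_ite_eq (Finset.range (l + 1)) m c]
  simp [Nat.lt_succ_iff]

lemma Ppoly_eval (c : ℕ → ℝ) (l : ℕ) (w : ℝ) :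
    (Ppoly c l).eval w = ∑ s ∈ Finset.range (l + 1), c s * w ^ s := by
  rw [Ppoly, Polynomial.eval_finset_sum]
  simp

lemma interp_fact (c : ℕ → ℝ) (l : ℕ) (z : ℕ → ℝ)
    (hinj : ∀ i j, i < l → j < l → z i = z j → i = j)
    (hroots : ∀ i, i < l → (Ppoly c l).eval (z i) = 0) :
    Ppoly c l = Polynomial.C (c l) * ∏ j ∈ Finset.range l, (Polynomial.X - Polynomial.C (z j)) := by
  set Nl : Polynomial ℝ := ∏ j ∈ Finset.range l, (Polynomial.X - Polynomial.C (z j)) with hNl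
  have hNlmonic : Nl.Monic := Polynomial.monic_prod_of_monic _ _
    (fun j _ => Polynomial.monic_X_sub_C (z j))
  have hNldeg : Nl.natDegree = l := by
    rw [hNl, Polynomial.natDegree_prod _ _ (fun j _ => Polynomial.X_sub_C_ne_zero (z j))]
    simp [Polynomial.natDegree_X_sub_C]
  set Dp : Polynomial ℝ := Ppoly c l - Polynomial.C (c l) * Nl with hDp
  have hcoeff : ∀ m : ℕ, (l : WithBot ℕ) ≤ m → Dp.coeff m = 0 := by
    intro m hm
    have hm' : l ≤ m := by exact_mod_cast hm
    rw [hDp, Polynomial.coeff_sub, Ppoly_coeff, Polynomial.coeff_C_mul]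
    rcases eq_or_lt_of_le hm' with h | h
    · rw [← h]
      simp only [le_refl, if_true]
      have : Nl.coeff l = 1 := by
        have := hNlmonic.leadingCoeff
        rwa [Polynomial.leadingCoeff, hNldeg] at this
      rw [this, mul_one, sub_self]
    · rw [if_neg (by omega), Polynomial.coeff_eq_zero_of_natDegree_lt (by omega : Nl.natDegree < m)]
      ring
  have hDp0 : Dp = 0 := by
    by_contra hne
    have hdeg : Dp.degree < (l : WithBot ℕ) := Polynomial.degree_lt_iff_coeff_zero _ _ |>.mpr
      (fun m hm => hcoeff m (by exact_mod_cast hm))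
    have hnat : Dp.natDegree < l := by
      rwa [Polynomial.natDegree_lt_iff_degree_lt hne]
    have hcard : ((Finset.range l).image z).card = l := by
      rw [Finset.card_image_of_injOn, Finset.card_range]
      intro i hi j hj hij
      exact hinj i j (Finset.mem_range.mp hi) (Finset.mem_range.mp hj) hij
    have heval0 : ∀ w ∈ (Finset.range l).image z, Dp.eval w = 0 := by
      intro w hw
      obtain ⟨i, hi, rfl⟩ := Finset.mem_image.mp hw
      have hi' := Finset.mem_range.mp hi
      rw [hDp, Polynomial.eval_sub, hroots i hi', Polynomial.eval_mul, hNl,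
        Polynomial.eval_prod]
      rw [Finset.prod_eq_zero hi (by simp)]
      ring
    exact hne (Polynomial.eq_zero_of_natDegree_lt_card_of_eval_eq_zero' Dp _ heval0
      (by rw [hcard]; exact hnat))
  have := sub_eq_zero.mp hDp0
  exact this

lemma final_ratio (x : ℝ) (hx0 : x ≠ 0) (ht : ∀ m : ℕ, 1 ≤ m → (x⁻¹) ^ m ≠ 1)
    (n l : ℕ) (h1 : 1 ≤ l) (h2 : l + 1 ≤ n) :
    (x ^ (2 * n)) ^ l * cbin x⁻¹ n (n - l) =
      x ^ ((n : ℤ) + (l : ℤ)) * ((x ^ (n : ℤ) - x ^ ((l : ℤ) - 1)) / (x ^ (l : ℤ) - 1)) *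
        ((x ^ (2 * n)) ^ (l - 1) * cbin x⁻¹ n (n - l + 1)) := by
  obtain ⟨l', rfl⟩ : ∃ l', l = l' + 1 := ⟨l - 1, by omega⟩
  obtain ⟨m, rfl⟩ : ∃ m, n = l' + 1 + m := ⟨n - (l' + 1), by omega⟩
  set L := l' + 1 with hL
  set N := L + m with hN
  have hm : N - L = m := by omega
  have hm1 : N - L + 1 = m + 1 := by omega
  rw [hm]
  -- cbin relation
  have hrel : cbin x⁻¹ N m = cbin x⁻¹ N (m + 1) * (1 - (x⁻¹) ^ (m + 1)) / (1 - (x⁻¹) ^ L) := by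
    have hNm : N - m = L := by omega
    have hne1 : (1 : ℝ) - (x⁻¹) ^ (m + 1) ≠ 0 := sub_ne_zero.mpr (Ne.symm (ht (m+1) (by omega)))
    have hne2 : (1 : ℝ) - (x⁻¹) ^ L ≠ 0 := sub_ne_zero.mpr (Ne.symm (ht L (by omega)))
    rw [cbin_succ x⁻¹ N m, hNm, mul_assoc, div_mul_cancel₀ _ hne1, mul_div_assoc,
      div_self hne2, mul_one]
  rw [hrel]
  -- zpow to pow
  have e1 : x ^ ((N : ℤ) + (L : ℤ)) = x ^ (N + L) := by
    rw [← Nat.cast_add, zpow_natCast]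
  have e2 : x ^ ((L : ℤ) - 1) = x ^ l' := by
    have : (L : ℤ) - 1 = (l' : ℕ) := by push_cast; omega
    rw [this, zpow_natCast]
  have e3 : x ^ (N : ℤ) = x ^ N := zpow_natCast x N
  have e4 : x ^ (L : ℤ) = x ^ L := zpow_natCast x L
  rw [e1, e2, e3, e4]
  have hxL : x ^ L - 1 ≠ 0 := by
    intro h
    apply ht L (by omega)
    rw [inv_pow]
    rw [sub_eq_zero] at h
    rw [h]; norm_num
  have hne2 : (1 : ℝ) - (x⁻¹) ^ L ≠ 0 := sub_ne_zero.mpr (Ne.symm (ht L (by omega)))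
  have hLpos : L - 1 = l' := by omega
  rw [hLpos]
  simp only [inv_pow]
  have hx1 : x ^ L ≠ 0 := pow_ne_zero _ hx0
  have hx2 : x ^ (m + 1) ≠ 0 := pow_ne_zero _ hx0
  field_simp
  ring_nf
  rw [hN, hL]
  ring


theorem stmt8 (q : ℝ) (hq : 1 < q) (n : ℕ) (hn : 1 ≤ n)
    (d : ℕ → ℕ → ℝ)
    (hd : ∀ l, l ≤ 2 * n →
      (Mmat q n l).mulVec (fun i => d (i : ℕ) l) = Pi.single (Fin.last l) 1)
    (Δ : Matrix (Fin (2 * n + 1)) (Fin (2 * n + 1)) ℝ)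
    (hΔ : ∀ i l : Fin (2 * n + 1),
      Δ i l = if (i : ℕ) ≤ (l : ℕ) then d (i : ℕ) (l : ℕ) else 0)
    (v : Fin (2 * n + 1) → ℝ)
    (hv : ∀ k : Fin (2 * n + 1), v k =
      if (k : ℕ) = 0 then 0
      else (-q) ^ ((n : ℤ) * (2 * (n : ℤ) - ((k : ℕ) : ℤ)) - 4 * (n : ℤ) ^ 2)
        - (-q) ^ (-2 * (n : ℤ) ^ 2))
    (K : Fin (2 * n + 1) → ℝ)
    (hK : (Mmat q n (2 * n) * Δ).mulVec K = v) :
    K ⟨0, by omega⟩ = 0 ∧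
    (∀ i : ℕ, ∀ h1 : n + 1 ≤ i, ∀ h2 : i ≤ 2 * n, K ⟨i, by omega⟩ = 0) ∧
    d n n * K ⟨n, by omega⟩ = (-q) ^ (-4 * (n : ℤ) ^ 2) ∧
    (∀ l : ℕ, ∀ h1 : 1 ≤ l, ∀ h2 : l ≤ n - 1,
      d (n - l) (n - l) * K ⟨n - l, by omega⟩ =
        (-q) ^ ((n : ℤ) + (l : ℤ)) *
          (((-q) ^ (n : ℤ) - (-q) ^ ((l : ℤ) - 1)) / ((-q) ^ (l : ℤ) - 1)) *
          (d (n - l + 1) (n - l + 1) * K ⟨n - l + 1, by omega⟩)) := by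
  classical
  have hq0 : (0 : ℝ) < q := lt_trans one_pos hq
  set x : ℝ := -q with hxdef
  have hx0 : x ≠ 0 := by
    rw [hxdef, ne_eq, neg_eq_zero]
    intro h; rw [h] at hq0; exact lt_irrefl 0 hq0
  have habs : |x| = q := by rw [hxdef, abs_neg, abs_of_pos hq0]
  have hpow_inj : ∀ a b : ℕ, x ^ a = x ^ b → a = b := by
    intro a b hab
    by_contra hne
    have habs' : q ^ a = q ^ b := by
      rw [← habs, ← abs_pow, ← abs_pow, hab]
    rcases Nat.lt_or_ge a b with h | h
    · exact absurd habs' (ne_of_lt (pow_lt_pow_right₀ hq h))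
    · exact absurd habs'.symm (ne_of_lt (pow_lt_pow_right₀ hq (by omega)))
  set t : ℝ := x⁻¹ with htdef
  have ht : ∀ m : ℕ, 1 ≤ m → t ^ m ≠ 1 := by
    intro m hm h1
    have h2 : |t ^ m| = 1 := by rw [h1, abs_one]
    rw [abs_pow, htdef, abs_inv, habs, inv_pow] at h2
    have h3 : q ^ m = 1 := by
      rw [← inv_eq_one]; exact h2
    have : (1 : ℝ) < q ^ m := one_lt_pow₀ hq (by omega)
    rw [h3] at this; exact lt_irrefl 1 this
  set y : ℕ → ℝ := fun i => x ^ (2 * n - i) with hydef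
  have hy_inj : ∀ i j, i ≤ 2 * n → j ≤ 2 * n → y i = y j → i = j := by
    intro i j hi hj hij
    have := hpow_inj _ _ hij
    omega
  set a : ℝ := x ^ (2 * n) with hadef
  set c0 : ℝ := x ^ (-4 * (n : ℤ) ^ 2) with hc0def
  have hat : ∀ j, j ≤ 2 * n → a * t ^ j = y j := by
    intro j hj
    rw [hadef, htdef, hydef, inv_pow]
    have hxj : (x : ℝ) ^ j ≠ 0 := pow_ne_zero _ hx0
    rw [mul_inv_eq_iff_eq_mul₀ hxj, ← pow_add]
    congr 1
    omega
  -- evaluation of the interpolation polynomials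
  have heval : ∀ l, l ≤ 2 * n → ∀ i, i ≤ l →
      (Ppoly (fun s => d s l) l).eval (y i) = if i = l then 1 else 0 := by
    intro l hl i hi
    have h0 := congrFun (hd l hl) ⟨i, by omega⟩
    simp only [Matrix.mulVec, dotProduct] at h0
    have hterm : ∀ s : Fin (l + 1), Mmat q n l ⟨i, by omega⟩ s * d (s : ℕ) l
        = d (s : ℕ) l * (y i) ^ (s : ℕ) := by
      intro s
      show (-q) ^ ((s : ℕ) * (2 * n - i)) * d (s : ℕ) l = _
      rw [← hxdef, pow_mul']
      ring
    rw [Finset.sum_congr rfl (fun s _ => hterm s)] at h0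
    rw [Fin.sum_univ_eq_sum_range (fun s => d s l * (y i) ^ s) (l + 1)] at h0
    rw [Pi.single_apply] at h0
    rw [Ppoly_eval, h0]
    congr 1
    simp [Fin.ext_iff]
  -- factorization
  have hPeval : ∀ l, l ≤ 2 * n → ∀ w,
      (Ppoly (fun s => d s l) l).eval w = d l l * ∏ j ∈ Finset.range l, (w - y j) := by
    intro l hl w
    have hfact := interp_fact (fun s => d s l) l y
      (fun i j hi hj hij => hy_inj i j (by omega) (by omega) hij)
      (fun i hil => by rw [heval l hl i (by omega), if_neg (by omega)])
    rw [hfact, Polynomial.eval_mul, Polynomial.eval_C, Polynomial.eval_prod]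
    simp
  have hdll : ∀ l, l ≤ 2 * n → d l l * ∏ j ∈ Finset.range l, (y l - y j) = 1 := by
    intro l hl
    rw [← hPeval l hl (y l), heval l hl l le_rfl, if_pos rfl]
  have hdne : ∀ l, l ≤ 2 * n → d l l ≠ 0 := by
    intro l hl
    exact left_ne_zero_of_mul_eq_one (hdll l hl)
  -- the triangular matrix A
  set A : Matrix (Fin (2 * n + 1)) (Fin (2 * n + 1)) ℝ :=
    Matrix.of (fun i l => (Ppoly (fun s => d s (l : ℕ)) (l : ℕ)).eval (y (i : ℕ))) with hAdef
  have hMA : Mmat q n (2 * n) * Δ = A := by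
    ext i lf
    rw [Matrix.mul_apply]
    have hterm : ∀ s : Fin (2 * n + 1), Mmat q n (2 * n) i s * Δ s lf =
        (fun m : ℕ => if m ≤ (lf : ℕ) then d m (lf : ℕ) * (y (i : ℕ)) ^ m else 0) (s : ℕ) := by
      intro s
      rw [hΔ]
      show (-q) ^ ((s : ℕ) * (2 * n - (i : ℕ))) *
        (if (s : ℕ) ≤ (lf : ℕ) then d (s : ℕ) (lf : ℕ) else 0) =
        (if (s : ℕ) ≤ (lf : ℕ) then d (s : ℕ) (lf : ℕ) * (y (i : ℕ)) ^ (s : ℕ) else 0)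
      rw [← hxdef, pow_mul']
      by_cases hs : (s : ℕ) ≤ (lf : ℕ)
      · rw [if_pos hs, if_pos hs]; ring
      · rw [if_neg hs, if_neg hs]; ring
    rw [Finset.sum_congr rfl (fun s _ => hterm s)]
    rw [Fin.sum_univ_eq_sum_range
      (fun m => if m ≤ (lf : ℕ) then d m (lf : ℕ) * (y (i : ℕ)) ^ m else 0) (2 * n + 1)]
    rw [← Finset.sum_subset (Finset.range_subset_range.mpr (by omega : (lf : ℕ) + 1 ≤ 2 * n + 1))
      (fun m _ hm => by rw [if_neg (by simp at hm ⊢; omega)])]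
    show _ = (Ppoly (fun s => d s (lf : ℕ)) (lf : ℕ)).eval (y (i : ℕ))
    rw [Ppoly_eval]
    apply Finset.sum_congr rfl
    intro m hm
    rw [if_pos (by simp at hm; omega)]
  have hAv : A.mulVec K = v := by rw [← hMA]; exact hK
  -- candidate solution
  set K' : Fin (2 * n + 1) → ℝ := fun m =>
    if 1 ≤ (m : ℕ) ∧ (m : ℕ) ≤ n then
      c0 * a ^ (n - (m : ℕ)) * cbin t n (m : ℕ) / d (m : ℕ) (m : ℕ) else 0 with hK'def
  have hv' : ∀ i : Fin (2 * n + 1), v i = c0 * (y (i : ℕ)) ^ n - c0 * a ^ n := by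
    intro i
    have e2 : c0 * a ^ n = x ^ (-2 * (n : ℤ) ^ 2) := by
      rw [hc0def, hadef, ← pow_mul, ← zpow_natCast x (2 * n * n), ← zpow_add₀ hx0]
      congr 1
      push_cast
      ring
    rw [hv i]
    by_cases hi : (i : ℕ) = 0
    · rw [if_pos hi, hi]
      have hy0 : y 0 = a := by
        show x ^ (2 * n - 0) = x ^ (2 * n)
        norm_num
      rw [hy0]
      ring
    · rw [if_neg hi]
      have hi2 : (i : ℕ) ≤ 2 * n := by omega
      have e1 : c0 * (y (i : ℕ)) ^ n
          = x ^ ((n : ℤ) * (2 * (n : ℤ) - ((i : ℕ) : ℤ)) - 4 * (n : ℤ) ^ 2) := by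
        rw [hc0def, hydef]
        show x ^ (-4 * (n : ℤ) ^ 2) * (x ^ (2 * n - (i : ℕ))) ^ n = _
        rw [← pow_mul, ← zpow_natCast x ((2 * n - (i : ℕ)) * n), ← zpow_add₀ hx0]
        congr 1
        push_cast [Nat.cast_sub hi2]
        ring
      rw [e1, e2]
  have hAv' : A.mulVec K' = v := by
    funext i
    show ∑ lf : Fin (2 * n + 1), A i lf * K' lf = v i
    have hterm : ∀ lf : Fin (2 * n + 1), A i lf * K' lf =
        (fun m : ℕ => if 1 ≤ m ∧ m ≤ n then
          c0 * (a ^ (n - m) * cbin t n m * ∏ j ∈ Finset.range m, (y (i : ℕ) - y j))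
          else 0) (lf : ℕ) := by
      intro lf
      show (Ppoly (fun s => d s (lf : ℕ)) (lf : ℕ)).eval (y (i : ℕ)) * K' lf =
        (if 1 ≤ (lf : ℕ) ∧ (lf : ℕ) ≤ n then
          c0 * (a ^ (n - (lf : ℕ)) * cbin t n (lf : ℕ) *
            ∏ j ∈ Finset.range (lf : ℕ), (y (i : ℕ) - y j))
          else 0)
      rw [hPeval (lf : ℕ) (by omega)]
      simp only [hK'def]
      by_cases hc : 1 ≤ (lf : ℕ) ∧ (lf : ℕ) ≤ n
      · rw [if_pos hc, if_pos hc]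
        have hd' := hdne (lf : ℕ) (by omega)
        field_simp
      · rw [if_neg hc, if_neg hc, mul_zero]
    rw [Finset.sum_congr rfl (fun lf _ => hterm lf)]
    rw [Fin.sum_univ_eq_sum_range (fun m : ℕ => if 1 ≤ m ∧ m ≤ n then
          c0 * (a ^ (n - m) * cbin t n m * ∏ j ∈ Finset.range m, (y (i : ℕ) - y j))
          else 0) (2 * n + 1)]
    rw [← Finset.sum_subset (Finset.range_subset_range.mpr (by omega : n + 1 ≤ 2 * n + 1))
      (fun m _ hm => by rw [if_neg (by simp at hm ⊢; omega)])]
    -- rewrite v i via Newton expansion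
    rw [hv' i]
    have hkey := newton_key t ht a (y (i : ℕ)) n
    have hprod : ∀ m ∈ Finset.range (n + 1),
        a ^ (n - m) * cbin t n m * ∏ j ∈ Finset.range m, (y (i : ℕ) - a * t ^ j)
        = a ^ (n - m) * cbin t n m * ∏ j ∈ Finset.range m, (y (i : ℕ) - y j) := by
      intro m hm
      congr 1
      apply Finset.prod_congr rfl
      intro j hj
      rw [hat j (by simp at hm hj; omega)]
    rw [Finset.sum_congr rfl hprod] at hkey
    rw [hkey, Finset.mul_sum]
    rw [Finset.sum_range_succ' (fun m : ℕ => if 1 ≤ m ∧ m ≤ n then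
          c0 * (a ^ (n - m) * cbin t n m * ∏ j ∈ Finset.range m, (y (i : ℕ) - y j))
          else 0) n]
    rw [Finset.sum_range_succ' (fun m : ℕ =>
          c0 * (a ^ (n - m) * cbin t n m * ∏ j ∈ Finset.range m, (y (i : ℕ) - y j))) n]
    rw [if_neg (by omega)]
    simp only [Nat.sub_zero, cbin_zero, Finset.range_zero, Finset.prod_empty, mul_one]
    rw [Finset.sum_congr rfl (fun m hm => if_pos (by simp at hm; omega))]
    ring
  -- uniqueness
  have hKK' : K = K' := by
    have htri : A.BlockTriangular OrderDual.toDual := by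
      intro i l hil
      have hil' : (i : ℕ) < (l : ℕ) := hil
      have := heval (l : ℕ) (by omega) (i : ℕ) (by omega)
      rw [if_neg (by omega)] at this
      exact this
    have hdet : A.det = 1 := by
      rw [Matrix.det_of_lowerTriangular A htri]
      apply Finset.prod_eq_one
      intro i _
      have := heval (i : ℕ) (by omega) (i : ℕ) le_rfl
      rw [if_pos rfl] at this
      exact this
    have hunit : IsUnit A.det := by rw [hdet]; exact isUnit_one
    have hA1 : A⁻¹ * A = 1 := Matrix.nonsing_inv_mul A hunit
    calc K = (A⁻¹ * A).mulVec K := by rw [hA1, Matrix.one_mulVec]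
    _ = A⁻¹.mulVec (A.mulVec K) := by rw [Matrix.mulVec_mulVec]
    _ = A⁻¹.mulVec (A.mulVec K') := by rw [hAv, hAv']
    _ = (A⁻¹ * A).mulVec K' := by rw [Matrix.mulVec_mulVec]
    _ = K' := by rw [hA1, Matrix.one_mulVec]
  rw [hKK']
  refine ⟨?_, ?_, ?_, ?_⟩
  · simp only [hK'def]
    rw [if_neg (show ¬(1 ≤ 0 ∧ 0 ≤ n) by omega)]
  · intro i hi1 hi2
    simp only [hK'def]
    rw [if_neg (show ¬(1 ≤ i ∧ i ≤ n) by omega)]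
  · simp only [hK'def]
    rw [if_pos (show 1 ≤ n ∧ n ≤ n from ⟨hn, le_rfl⟩)]
    rw [Nat.sub_self, pow_zero, mul_one, cbin_self t ht n]
    rw [mul_one, mul_comm (d n n), div_mul_cancel₀ _ (hdne n (by omega))]
  · intro l hl1 hl2
    have hln : l + 1 ≤ n := by omega
    simp only [hK'def]
    rw [if_pos (show 1 ≤ n - l ∧ n - l ≤ n by omega),
      if_pos (show 1 ≤ n - l + 1 ∧ n - l + 1 ≤ n by omega)]
    have hcan : ∀ dd z : ℝ, dd ≠ 0 → dd * (z / dd) = z := by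
      intro dd z h
      field_simp
    rw [hcan _ _ (hdne (n - l) (by omega)), hcan _ _ (hdne (n - l + 1) (by omega))]
    have e1 : n - (n - l) = l := by omega
    have e2 : n - (n - l + 1) = l - 1 := by omega
    rw [e1, e2, hadef, htdef]
    linear_combination c0 * final_ratio x hx0 ht n l hl1 hln
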